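/- arXiv:0806.2533 — 3 statements merged into one kernel-verified Lean document; each statement's English description precedes it below -/
import Mathlib

section
/- Assume the minimizer of ‖y − Hd'‖² over d' ∈ S is unique. Then d ∈ S is this ML vector if and only if the noise vector n satisfies, for every k with 1 ≤ k ≤ 2N and every tuple (i_1,…,i_k) of k distinct indices in {1,…,2N}, the inequality (n + H(x − d) + Σ_{j=1}^{k} h_{i_j} d_{i_j})ᵀ (Σ_{j=1}^{k} h_{i_j} d_{i_j}) ≥ 0. -/
open Matrix BigOperators

/-- `Σ_{j=1}^{k} h_{i_j} d_{i_j}`, where `h_i` is the `i`-th column of `H` and the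
tuple of indices is `u = (i_1, …, i_k)`. -/
def colComb (N k : ℕ) (H : Matrix (Fin (2 * N)) (Fin (2 * N)) ℝ)
    (d : Fin (2 * N) → ℝ) (u : Fin k → Fin (2 * N)) : Fin (2 * N) → ℝ :=
  ∑ j, d (u j) • (fun r => H r (u j))

lemma colComb_apply (N k : ℕ) (H : Matrix (Fin (2 * N)) (Fin (2 * N)) ℝ)
    (d : Fin (2 * N) → ℝ) (u : Fin k → Fin (2 * N)) (r : Fin (2 * N)) :
    colComb N k H d u r = ∑ j, d (u j) * H r (u j) := by
  simp [colComb]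

lemma quad_ident {m : ℕ} (a v : Fin m → ℝ) :
    (a + (2:ℝ) • v) ⬝ᵥ (a + (2:ℝ) • v) - a ⬝ᵥ a = 4 * ((a + v) ⬝ᵥ v) := by
  have h := dotProduct_comm a v
  simp only [add_dotProduct, dotProduct_add, smul_dotProduct, dotProduct_smul,
    smul_eq_mul, h]
  ring

lemma flip_mulVec {m k : ℕ} (H : Matrix (Fin m) (Fin m) ℝ) (d d' : Fin m → ℝ)
    (u : Fin k → Fin m) (hu : Function.Injective u)
    (hvals : ∀ i, d i - d' i = if i ∈ Finset.univ.image u then 2 * d i else 0) :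
    ∀ r, H.mulVec d r - H.mulVec d' r = 2 * (∑ j, d (u j) * H r (u j)) := by
  intro r
  have h0 : H.mulVec d r - H.mulVec d' r = ∑ i, H r i * (d i - d' i) := by
    simp [mulVec, dotProduct, mul_sub, Finset.sum_sub_distrib]
  rw [h0]
  have h1 : ∑ i, H r i * (d i - d' i)
      = ∑ i ∈ Finset.univ.image u, H r i * (2 * d i) := by
    calc ∑ i, H r i * (d i - d' i)
        = ∑ i, if i ∈ Finset.univ.image u then H r i * (2 * d i) else 0 := by
          refine Finset.sum_congr rfl fun i _ => ?_
          rw [hvals i]; split <;> simp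
      _ = ∑ i ∈ Finset.univ ∩ Finset.univ.image u, H r i * (2 * d i) :=
          Finset.sum_ite_mem _ _ _
      _ = ∑ i ∈ Finset.univ.image u, H r i * (2 * d i) := by rw [Finset.univ_inter]
  rw [h1, Finset.sum_image (fun a _ b _ h => hu h), Finset.mul_sum]
  exact Finset.sum_congr rfl fun j _ => by ring

/-- assuming the minimizer of `‖y − Hd'‖²` over `d' ∈ S = {−1,+1}^{2N}`
is unique (with `y = Hx + n`), a vector `d ∈ S` is this ML vector if and only if the
noise `n` satisfies, for every `k` with `1 ≤ k ≤ 2N` and every tuple of `k` distinct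
indices, `(n + H(x − d) + Σ_j h_{i_j} d_{i_j})ᵀ (Σ_j h_{i_j} d_{i_j}) ≥ 0`. -/
theorem stmt_1 (N : ℕ) (hN : 1 ≤ N)
    (H : Matrix (Fin (2 * N)) (Fin (2 * N)) ℝ)
    (x : Fin (2 * N) → ℝ) (hx : ∀ i, x i = 1 ∨ x i = -1)
    (n : Fin (2 * N) → ℝ)
    (y : Fin (2 * N) → ℝ) (hy : y = H.mulVec x + n)
    (huniq : ∃! dml : Fin (2 * N) → ℝ, (∀ i, dml i = 1 ∨ dml i = -1) ∧
      ∀ d' : Fin (2 * N) → ℝ, (∀ i, d' i = 1 ∨ d' i = -1) →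
        (y - H.mulVec dml) ⬝ᵥ (y - H.mulVec dml) ≤ (y - H.mulVec d') ⬝ᵥ (y - H.mulVec d'))
    (d : Fin (2 * N) → ℝ) (hd : ∀ i, d i = 1 ∨ d i = -1) :
    (∀ d' : Fin (2 * N) → ℝ, (∀ i, d' i = 1 ∨ d' i = -1) →
      (y - H.mulVec d) ⬝ᵥ (y - H.mulVec d) ≤ (y - H.mulVec d') ⬝ᵥ (y - H.mulVec d'))
    ↔
    (∀ k : ℕ, 1 ≤ k → k ≤ 2 * N → ∀ u : Fin k → Fin (2 * N), Function.Injective u →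
      (n + H.mulVec (x - d) + colComb N k H d u) ⬝ᵥ colComb N k H d u ≥ 0) := by
  have ha : y - H.mulVec d = n + H.mulVec (x - d) := by
    funext r
    simp only [hy, mulVec_sub, Pi.add_apply, Pi.sub_apply]
    ring
  constructor
  · intro hmin k hk1 hk2 u hu
    set d' : Fin (2 * N) → ℝ :=
      fun i => if i ∈ Finset.univ.image u then -d i else d i with hd'def
    have hd' : ∀ i, d' i = 1 ∨ d' i = -1 := by
      intro i
      simp only [hd'def]
      rcases hd i with h | h <;> split <;> simp [h]
    have hvals : ∀ i, d i - d' i = if i ∈ Finset.univ.image u then 2 * d i else 0 := by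
      intro i
      simp only [hd'def]
      split <;> ring
    have hflip := flip_mulVec H d d' u hu hvals
    have hyd' : y - H.mulVec d' = (y - H.mulVec d) + (2:ℝ) • colComb N k H d u := by
      funext r
      have := hflip r
      simp only [Pi.add_apply, Pi.sub_apply, Pi.smul_apply, smul_eq_mul, colComb_apply]
      linarith
    have hle := hmin d' hd'
    rw [hyd'] at hle
    have hq := quad_ident (y - H.mulVec d) (colComb N k H d u)
    rw [← ha]
    linarith
  · intro hineq d' hd'
    by_cases hdd : d' = d
    · rw [hdd]
    · set T : Finset (Fin (2 * N)) := Finset.univ.filter (fun i => d' i ≠ d i) with hT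
      have hTne : T.Nonempty := by
        rw [Finset.filter_nonempty_iff]
        by_contra h
        push_neg at h
        exact hdd (funext fun i => h i (Finset.mem_univ i))
      set k := T.card with hk
      have hk1 : 1 ≤ k := Finset.card_pos.mpr hTne
      have hk2 : k ≤ 2 * N := by
        calc k ≤ Finset.univ.card := Finset.card_le_card (Finset.filter_subset _ _)
        _ = 2 * N := by simp
      set u : Fin k → Fin (2 * N) := fun j => ((T.orderIsoOfFin rfl) j : Fin (2 * N))
        with hudef
      have hu : Function.Injective u := by
        intro i j hij
        exact (T.orderIsoOfFin rfl).injective (Subtype.ext hij)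
      have him : Finset.univ.image u = T := by
        apply Finset.eq_of_subset_of_card_le
        · intro i hi
          simp only [Finset.mem_image] at hi
          obtain ⟨j, _, rfl⟩ := hi
          exact ((T.orderIsoOfFin rfl) j).2
        · rw [Finset.card_image_of_injective _ hu]
          simp [hk]
      have hvals : ∀ i, d i - d' i = if i ∈ Finset.univ.image u then 2 * d i else 0 := by
        intro i
        rw [him]
        by_cases hiT : i ∈ T
        · rw [if_pos hiT]
          have hne : d' i ≠ d i := (Finset.mem_filter.mp hiT).2
          rcases hd i with h1 | h1 <;> rcases hd' i with h2 | h2 <;>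
            simp [h1, h2] at hne ⊢ <;> ring
        · rw [if_neg hiT]
          have h3 : ¬ d' i ≠ d i := fun h => hiT (Finset.mem_filter.mpr ⟨Finset.mem_univ i, h⟩)
          rw [not_not.mp h3]
          ring
      have hflip := flip_mulVec H d d' u hu hvals
      have hyd' : y - H.mulVec d' = (y - H.mulVec d) + (2:ℝ) • colComb N k H d u := by
        funext r
        have := hflip r
        simp only [Pi.add_apply, Pi.sub_apply, Pi.smul_apply, smul_eq_mul, colComb_apply]
        linarith
      have hge := hineq k hk1 hk2 u hu
      rw [← ha] at hge
      rw [hyd']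
      have hq := quad_ident (y - H.mulVec d) (colComb N k H d u)
      linarith
end

section
/- Assume the minimizer of ‖y − Hd'‖² over d' ∈ S is unique, where y = Hx + n. If the noise vector n belongs to R_d for some d ∈ S, then d is the ML vector, i.e., d minimizes ‖y − Hd'‖² over d' ∈ S. -/
open Matrix BigOperators

/-- Membership of `v` in the region `R_{d^m}`: the defining inequalities hold for all
`k` with `1 ≤ k ≤ m` and all tuples of `k` distinct indices. -/
def memR (N : ℕ) (H : Matrix (Fin (2 * N)) (Fin (2 * N)) ℝ)
    (x d : Fin (2 * N) → ℝ) (m : ℕ) (v : Fin (2 * N) → ℝ) : Prop :=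
  ∀ k : ℕ, 1 ≤ k → k ≤ m → ∀ u : Fin k → Fin (2 * N), Function.Injective u →
    (v + H.mulVec (x - d) + colComb N k H d u) ⬝ᵥ colComb N k H d u ≥ 0

/-- assuming the minimizer of `‖y − Hd'‖²` over `d' ∈ S = {−1,+1}^{2N}`
is unique (with `y = Hx + n`), if the noise vector `n` belongs to `R_d = R_{d^{2N}}`
for some `d ∈ S`, then `d` is the ML vector. -/
theorem stmt_2 (N : ℕ) (hN : 1 ≤ N)
    (H : Matrix (Fin (2 * N)) (Fin (2 * N)) ℝ)
    (x : Fin (2 * N) → ℝ) (hx : ∀ i, x i = 1 ∨ x i = -1)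
    (n : Fin (2 * N) → ℝ)
    (y : Fin (2 * N) → ℝ) (hy : y = H.mulVec x + n)
    (huniq : ∃! dml : Fin (2 * N) → ℝ, (∀ i, dml i = 1 ∨ dml i = -1) ∧
      ∀ d' : Fin (2 * N) → ℝ, (∀ i, d' i = 1 ∨ d' i = -1) →
        (y - H.mulVec dml) ⬝ᵥ (y - H.mulVec dml) ≤ (y - H.mulVec d') ⬝ᵥ (y - H.mulVec d'))
    (d : Fin (2 * N) → ℝ) (hd : ∀ i, d i = 1 ∨ d i = -1)
    (hn : memR N H x d (2 * N) n) :
    ∀ d' : Fin (2 * N) → ℝ, (∀ i, d' i = 1 ∨ d' i = -1) →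
      (y - H.mulVec d) ⬝ᵥ (y - H.mulVec d) ≤ (y - H.mulVec d') ⬝ᵥ (y - H.mulVec d') := by
  intro d' hd'
  classical
  set A : Finset (Fin (2 * N)) := Finset.univ.filter (fun i => d' i ≠ d i) with hA
  by_cases hk0 : A = ∅
  · have hdd : d' = d := by
      funext i
      by_contra h
      have : i ∈ A := by simp [hA, h]
      simp [hk0] at this
    rw [hdd]
  · set k := A.card with hkdef
    have hAne : A.Nonempty := Finset.nonempty_iff_ne_empty.mpr hk0
    have hk1 : 1 ≤ k := Finset.card_pos.mpr hAne
    have hk2 : k ≤ 2 * N := by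
      have := Finset.card_le_univ A
      simpa using this
    let e : Fin k ≃o {x // x ∈ A} := A.orderIsoOfFin rfl
    let u : Fin k → Fin (2 * N) := fun j => (e j : Fin (2 * N))
    have hu : Function.Injective u := fun a b h => e.injective (Subtype.ext h)
    have humem : ∀ j, u j ∈ A := fun j => (e j).2
    set c := colComb N k H d u with hcdef
    -- pointwise formula for c
    have hc : ∀ r, c r = ∑ i ∈ A, d i * H r i := by
      intro r
      have h1 : c r = ∑ j : Fin k, d (u j) * H r (u j) := by
        simp [hcdef, colComb, Finset.sum_apply]
      rw [h1]
      rw [← Finset.sum_coe_sort A (fun i => d i * H r i)]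
      exact Fintype.sum_equiv e.toEquiv _ _ (fun j => rfl)
    -- pointwise difference of d' and d
    have hdiff : ∀ i, d' i - d i = if i ∈ A then -2 * d i else 0 := by
      intro i
      by_cases hiA : i ∈ A
      · have hne : d' i ≠ d i := by
          have h := hiA
          simp only [hA, Finset.mem_filter, Finset.mem_univ, true_and] at h
          exact h
        rcases hd i with h1 | h1 <;> rcases hd' i with h2 | h2 <;>
          simp [hiA, h1, h2] at hne ⊢ <;> linarith
      · have heq : d' i = d i := by
          by_contra h
          exact hiA (by simp [hA, h])
        simp [hiA, heq]
    -- H d' = H d + (-2) • c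
    have hmv : H.mulVec d' = H.mulVec d + (-2 : ℝ) • c := by
      funext r
      have : H.mulVec d' r - H.mulVec d r = -2 * c r := by
        have h1 : H.mulVec d' r - H.mulVec d r = ∑ i, H r i * (d' i - d i) := by
          simp [Matrix.mulVec, dotProduct, ← Finset.sum_sub_distrib, mul_sub]
        rw [h1]
        have h2 : ∑ i, H r i * (d' i - d i)
            = ∑ i ∈ A, H r i * (-2 * d i) := by
          rw [Finset.sum_congr rfl (fun i _ => by rw [hdiff i])]
          simp only [mul_ite, mul_zero, Finset.sum_ite_mem, Finset.univ_inter]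
        rw [h2, hc r, Finset.mul_sum]
        exact Finset.sum_congr rfl (fun i _ => by ring)
      have := this
      simp only [Pi.add_apply, Pi.smul_apply, smul_eq_mul]
      linarith
    -- key inequality from the region
    have hkey : (n + H.mulVec (x - d) + c) ⬝ᵥ c ≥ 0 := hn k hk1 hk2 u hu
    have herr : y - H.mulVec d = n + H.mulVec (x - d) := by
      rw [hy, Matrix.mulVec_sub]
      abel
    set ev := y - H.mulVec d with hev
    have hyd' : y - H.mulVec d' = ev + (2 : ℝ) • c := by
      rw [hev, hmv]
      funext r
      simp only [Pi.sub_apply, Pi.add_apply, Pi.smul_apply, smul_eq_mul]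
      ring
    rw [hyd']
    have hec : (ev + c) ⬝ᵥ c ≥ 0 := by rw [herr]; exact hkey
    have hexp : (ev + (2 : ℝ) • c) ⬝ᵥ (ev + (2 : ℝ) • c)
        = ev ⬝ᵥ ev + 4 * ((ev + c) ⬝ᵥ c) := by
      simp only [dotProduct_add, add_dotProduct, smul_dotProduct, dotProduct_smul,
        smul_eq_mul]
      have := dotProduct_comm ev c
      ring_nf
      linarith [dotProduct_comm ev c, dotProduct_comm c ev]
    rw [hexp]
    linarith
end

section
/- Assume that for every v ∈ ℝ^{2N} the minimizer of ‖(Hx + v) − Hd'‖² over d' ∈ S is unique. Then for any two distinct vectors d_i, d_j ∈ S, the regions R_{d_i} and R_{d_j} are disjoint: R_{d_i} ∩ R_{d_j} = ∅. -/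
open Matrix BigOperators

/-- If `v ∈ R_d` then `d` minimizes `‖(Hx+v) − Hd'‖²` over `S`. -/
lemma memR_min (N : ℕ) (H : Matrix (Fin (2 * N)) (Fin (2 * N)) ℝ)
    (x d : Fin (2 * N) → ℝ) (hd : ∀ i, d i = 1 ∨ d i = -1)
    (v : Fin (2 * N) → ℝ) (hv : memR N H x d (2 * N) v) :
    ∀ d' : Fin (2 * N) → ℝ, (∀ i, d' i = 1 ∨ d' i = -1) →
      (H.mulVec x + v - H.mulVec d) ⬝ᵥ (H.mulVec x + v - H.mulVec d) ≤
        (H.mulVec x + v - H.mulVec d') ⬝ᵥ (H.mulVec x + v - H.mulVec d') := by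
  intro d' hd'
  by_cases hdd : d' = d
  · subst hdd; exact le_refl _
  -- index set where they differ
  set T : Finset (Fin (2 * N)) := Finset.univ.filter (fun i => d' i ≠ d i) with hT
  have hTne : T.Nonempty := by
    rcases Function.ne_iff.mp hdd with ⟨i, hi⟩
    exact ⟨i, by simp [hT, hi]⟩
  set k := T.card with hk
  have hk1 : 1 ≤ k := Finset.card_pos.mpr hTne
  have hk2 : k ≤ 2 * N := by
    simpa using Finset.card_le_univ T
  set u : Fin k → Fin (2 * N) := fun j => T.orderEmbOfFin rfl j with hu
  have hinj : Function.Injective u := fun a b h => (T.orderEmbOfFin rfl).injective h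
  have himg : Finset.univ.image u = T := by
    apply Finset.coe_injective
    rw [Finset.coe_image, Finset.coe_univ, Set.image_univ]
    exact T.range_orderEmbOfFin rfl
  set s : Fin (2 * N) → ℝ := colComb N k H d u with hs
  -- s r = ∑ i in T, d i * H r i
  have hsr : ∀ r, s r = ∑ i ∈ T, d i * H r i := by
    intro r
    have : s r = ∑ j, d (u j) * H r (u j) := by
      simp [hs, colComb, Finset.sum_apply]
    rw [this, ← himg, Finset.sum_image (fun a _ b _ h => hinj h)]
  -- on T, d i - d' i = 2 * d i
  have hdiff : ∀ i ∈ T, d i - d' i = 2 * d i := by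
    intro i hi
    have hne : d' i ≠ d i := by simpa [hT] using hi
    rcases hd i with h1 | h1 <;> rcases hd' i with h2 | h2 <;>
      simp [h1, h2] at hne ⊢ <;> ring
  -- Hd' = Hd - 2s
  have hHd' : H.mulVec d' = H.mulVec d - (2:ℝ) • s := by
    funext r
    have : H.mulVec d r - H.mulVec d' r = 2 * s r := by
      rw [hsr]
      simp only [Matrix.mulVec, dotProduct]
      rw [← Finset.sum_sub_distrib, Finset.mul_sum]
      rw [← Finset.sum_subset (Finset.subset_univ T)]
      · apply Finset.sum_congr rfl
        intro i hi
        rw [← mul_sub, hdiff i hi]; ring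
      · intro i _ hi
        have : d' i = d i := by
          by_contra h
          exact hi (by simp [hT, h])
        rw [this]; ring
    have := this
    simp only [Pi.sub_apply, Pi.smul_apply, smul_eq_mul] at *
    linarith
  -- the region inequality for this tuple
  have hineq := hv k hk1 hk2 u hinj
  rw [← hs] at hineq
  have hAs : (H.mulVec x + v - H.mulVec d + s) ⬝ᵥ s ≥ 0 := by
    have : v + H.mulVec (x - d) + s = H.mulVec x + v - H.mulVec d + s := by
      rw [Matrix.mulVec_sub]; abel
    rwa [this] at hineq
  -- expand
  set A := H.mulVec x + v - H.mulVec d with hA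
  have hB : H.mulVec x + v - H.mulVec d' = A + (2:ℝ) • s := by
    rw [hHd', hA]; abel
  rw [hB]
  have hexp : (A + (2:ℝ) • s) ⬝ᵥ (A + (2:ℝ) • s) = A ⬝ᵥ A + 4 * ((A + s) ⬝ᵥ s) := by
    rw [two_smul]
    simp only [add_dotProduct, dotProduct_add, dotProduct_comm s A]
    ring
  rw [hexp]
  nlinarith [hAs]

/-- assume that for every `v ∈ ℝ^{2N}` the minimizer of
`‖(Hx + v) − Hd'‖²` over `d' ∈ S = {−1,+1}^{2N}` is unique.  Then for any two
distinct `d_i, d_j ∈ S`, the regions `R_{d_i}` and `R_{d_j}` are disjoint. -/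
theorem stmt_3 (N : ℕ) (hN : 1 ≤ N)
    (H : Matrix (Fin (2 * N)) (Fin (2 * N)) ℝ)
    (x : Fin (2 * N) → ℝ) (hx : ∀ i, x i = 1 ∨ x i = -1)
    (huniq : ∀ v : Fin (2 * N) → ℝ,
      ∃! dml : Fin (2 * N) → ℝ, (∀ i, dml i = 1 ∨ dml i = -1) ∧
        ∀ d' : Fin (2 * N) → ℝ, (∀ i, d' i = 1 ∨ d' i = -1) →
          (H.mulVec x + v - H.mulVec dml) ⬝ᵥ (H.mulVec x + v - H.mulVec dml) ≤
            (H.mulVec x + v - H.mulVec d') ⬝ᵥ (H.mulVec x + v - H.mulVec d'))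
    (di dj : Fin (2 * N) → ℝ)
    (hdi : ∀ i, di i = 1 ∨ di i = -1) (hdj : ∀ i, dj i = 1 ∨ dj i = -1)
    (hne : di ≠ dj) :
    {v : Fin (2 * N) → ℝ | memR N H x di (2 * N) v} ∩
      {v : Fin (2 * N) → ℝ | memR N H x dj (2 * N) v} = ∅ := by
  ext v
  simp only [Set.mem_inter_iff, Set.mem_setOf_eq, Set.mem_empty_iff_false, iff_false,
    not_and]
  intro hvi hvj
  obtain ⟨dml, _, hun⟩ := huniq v
  have h1 : di = dml := hun di ⟨hdi, memR_min N H x di hdi v hvi⟩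
  have h2 : dj = dml := hun dj ⟨hdj, memR_min N H x dj hdj v hvj⟩
  exact hne (h1.trans h2.symm)
end
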